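/- arXiv:2404.00746 — 3 statements merged into one kernel-verified Lean document; each statement's English description precedes it below -/
import Mathlib

section
/- Let S be an uncertain sequence all of whose existential probabilities are nonnegative, and let α be a pattern that occurs in S. Then for every pattern β, maxPr_S(α ++ β) ≤ maxPr_S(α) × maxPr_{S|α}(β). -/
variable {I : Type*}

/-- An uncertain sequence: a finite list of (item, existential probability) pairs. -/
abbrev USeq (I : Type*) := List (I × ℝ)

/-- An uncertain database: a finite list of uncertain sequences. -/
abbrev UDB (I : Type*) := List (USeq I)

/-- `α` occurs in `S`: some sublist of `S` has item list `α`. -/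
def Occurs (α : List I) (S : USeq I) : Prop :=
  ∃ o : USeq I, o.Sublist S ∧ o.map Prod.fst = α

/-- Maximum occurrence probability of pattern `α` in `S`
(`0` if `α` has no occurrence in `S`; `1` for the empty pattern). -/
noncomputable def maxPrS [DecidableEq I] (α : List I) (S : USeq I) : ℝ :=
  WithBot.unbotD 0 (((S.sublists.filter fun o => decide (o.map Prod.fst = α)).map
      fun o => (o.map Prod.snd).prod).maximum)

/-- Greedy projection: `projSeq α S = some S'` iff `α` occurs in `S`, in which case `S'`
is the suffix of `S` strictly after the last matched position of the greedy (leftmost)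
occurrence of `α` in `S`.  For the empty pattern it is `S` itself. -/
def projSeq [DecidableEq I] : List I → USeq I → Option (USeq I)
  | [], S => some S
  | _ :: _, [] => none
  | i :: α, (x, _) :: rest =>
      if x = i then projSeq α rest else projSeq (i :: α) rest

/-- The projected database `DB|α`. -/
def projDB [DecidableEq I] (α : List I) (DB : UDB I) : UDB I :=
  DB.filterMap (projSeq α)

/-- `P̂_D(i)`: maximum probability of an entry with item `i` over all sequences of `D`
(`0` if `i` occurs in no sequence of `D`). -/
noncomputable def Phat [DecidableEq I] (D : UDB I) (i : I) : ℝ :=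
  WithBot.unbotD 0 (((D.flatten.filter fun e => decide (e.1 = i)).map Prod.snd).maximum)

/-- `maxPr(α)` relative to `DB`: the product of per-step maximum probabilities over the
successively projected databases. -/
noncomputable def maxPrDB [DecidableEq I] (DB : UDB I) (α : List I) : ℝ :=
  ∏ k : Fin α.length, Phat (projDB (α.take k.val) DB) (α.get k)

/-- Expected support of `α` in `DB`. -/
noncomputable def expSup [DecidableEq I] (DB : UDB I) (α : List I) : ℝ :=
  (DB.map fun S => maxPrS α S).sum

/-- `expSup^cap` of a nonempty pattern (junk value `0` on the empty pattern). -/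
noncomputable def expSupCap [DecidableEq I] (DB : UDB I) (α : List I) : ℝ :=
  match α.getLast? with
  | none => 0
  | some i =>
      maxPrDB DB α.dropLast *
        ((projDB α.dropLast DB).map fun S' => maxPrS [i] S').sum

/-- Number of sequences of `D` in which item `i` occurs. -/
def supCount [DecidableEq I] (D : UDB I) (i : I) : ℕ :=
  (D.filter fun S => decide (i ∈ S.map Prod.fst)).length

/-- `expSupport^top` of a nonempty pattern (junk value `0` on the empty pattern). -/
noncomputable def expSupTop [DecidableEq I] (DB : UDB I) (α : List I) : ℝ :=
  match α.getLast? with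
  | none => 0
  | some i =>
      maxPrDB DB α.dropLast * Phat (projDB α.dropLast DB) i *
        (supCount (projDB α.dropLast DB) i : ℝ)

/-- Item `i` occurs in some sequence of `D`. -/
def ItemOccursIn (D : UDB I) (i : I) : Prop :=
  ∃ S ∈ D, i ∈ S.map Prod.fst

/-- `sWeight`: average weight of the items of a pattern. -/
noncomputable def sWeight (w : I → ℝ) (α : List I) : ℝ :=
  (α.map w).sum / (α.length : ℝ)

/-- Maximum weight among the items of a pattern (`0` for the empty pattern). -/
noncomputable def mxWs (w : I → ℝ) (α : List I) : ℝ :=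
  WithBot.unbotD 0 ((α.map w).maximum)

/-- Maximum weight among items occurring in some sequence of `D` (`0` if none). -/
noncomputable def mxWDB (w : I → ℝ) (D : UDB I) : ℝ :=
  WithBot.unbotD 0 ((D.flatten.map fun e => w e.1).maximum)

/-- `wgt^cap`. -/
noncomputable def wgtCap [DecidableEq I] (DB : UDB I) (w : I → ℝ) (α : List I) : ℝ :=
  max (mxWDB w (projDB α.dropLast DB)) (mxWs w α)

/-- Weighted expected support. -/
noncomputable def WES [DecidableEq I] (DB : UDB I) (w : I → ℝ) (α : List I) : ℝ :=
  expSup DB α * sWeight w α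

/-- `wExpSup^cap`. -/
noncomputable def wExpSupCap [DecidableEq I] (DB : UDB I) (w : I → ℝ) (α : List I) : ℝ :=
  expSupCap DB α * wgtCap DB w α
/-! ### Auxiliary lemmas -/

theorem projSeq_suffix [DecidableEq I] :
    ∀ (L : USeq I) (α : List I) (T : USeq I), projSeq α L = some T → T <:+ L
  | L, [], T, h => by
      simp [projSeq] at h; exact h ▸ List.suffix_refl L
  | [], i :: α, T, h => by simp [projSeq] at h
  | (x, p) :: rest, i :: α, T, h => by
      by_cases hx : x = i
      · simp only [projSeq, if_pos hx] at h
        exact (projSeq_suffix rest α T h).trans (List.suffix_cons _ _)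
      · simp only [projSeq, if_neg hx] at h
        exact (projSeq_suffix rest (i :: α) T h).trans (List.suffix_cons _ _)

theorem projSeq_pattern_sublist [DecidableEq I] :
    ∀ (L : USeq I) (α : List I) (T : USeq I), projSeq α L = some T →
      α.Sublist (L.map Prod.fst)
  | L, [], T, _ => List.nil_sublist _
  | [], i :: α, T, h => by simp [projSeq] at h
  | (x, p) :: rest, i :: α, T, h => by
      by_cases hx : x = i
      · simp only [projSeq, if_pos hx] at h
        simpa [hx] using (projSeq_pattern_sublist rest α T h).cons₂ i
      · simp only [projSeq, if_neg hx] at h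
        exact (projSeq_pattern_sublist rest (i :: α) T h).cons x

theorem projSeq_isSome_of_sublist [DecidableEq I] :
    ∀ (L : USeq I) (γ : List I), γ.Sublist (L.map Prod.fst) → (projSeq γ L).isSome
  | L, [], _ => by simp [projSeq]
  | [], i :: γ, h => by simp at h
  | (x, p) :: rest, i :: γ, h => by
      by_cases hx : x = i
      · simp only [projSeq, if_pos hx]
        refine projSeq_isSome_of_sublist rest γ ?_
        simp only [List.map_cons] at h
        cases h with
        | cons _ h' => exact ((List.sublist_cons_self i γ).trans h')
        | cons_cons _ h' => exact h'
      · simp only [projSeq, if_neg hx]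
        refine projSeq_isSome_of_sublist rest (i :: γ) ?_
        simp only [List.map_cons] at h
        cases h with
        | cons _ h' => exact h'
        | cons_cons _ h' => exact absurd rfl hx

theorem projSeq_cons_suffix [DecidableEq I] :
    ∀ (L : USeq I) (i : I) (γ : List I) (T T' : USeq I),
      projSeq (i :: γ) L = some T → projSeq γ L = some T' → T <:+ T'
  | [], i, γ, T, T', h1, _ => by simp [projSeq] at h1
  | (x, p) :: rest, i, [], T, T', h1, h2 => by
      simp only [projSeq] at h2
      obtain rfl : (x, p) :: rest = T' := Option.some.inj h2
      exact projSeq_suffix _ _ _ h1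
  | (x, p) :: rest, i, j :: γ', T, T', h1, h2 => by
      by_cases hx : x = i <;> by_cases hj : x = j
      · simp only [projSeq, if_pos hx, if_pos hj] at h1 h2
        exact projSeq_cons_suffix rest j γ' T T' h1 h2
      · simp only [projSeq, if_pos hx, if_neg hj] at h1 h2
        rw [h1] at h2
        exact (Option.some.inj h2) ▸ List.suffix_refl T
      · simp only [projSeq, if_neg hx, if_pos hj] at h1 h2
        -- h1 : projSeq (i :: j :: γ') rest = some T, h2 : projSeq γ' rest = some T'
        have hsub : (j :: γ').Sublist (rest.map Prod.fst) :=
          (List.sublist_cons_self i _).trans (projSeq_pattern_sublist rest _ _ h1)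
        obtain ⟨T₂, hT₂⟩ := Option.isSome_iff_exists.1
          (projSeq_isSome_of_sublist rest (j :: γ') hsub)
        exact (projSeq_cons_suffix rest i (j :: γ') T T₂ h1 hT₂).trans
          (projSeq_cons_suffix rest j γ' T₂ T' hT₂ h2)
      · simp only [projSeq, if_neg hx, if_neg hj] at h1 h2
        exact projSeq_cons_suffix rest i (j :: γ') T T' h1 h2

theorem drop_sublist_projSeq [DecidableEq I] :
    ∀ (S : USeq I) (α β : List I) (S' t : USeq I),
      projSeq α S = some S' → t.Sublist S → t.map Prod.fst = α ++ β →
      (t.drop α.length).Sublist S'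
  | S, [], β, S', t, hS', ht, _ => by
      simp only [projSeq] at hS'
      simpa using (Option.some.inj hS') ▸ ht
  | [], i :: α, β, S', t, hS', _, _ => by simp [projSeq] at hS'
  | (x, p) :: rest, i :: α, β, S', t, hS', ht, hf => by
      obtain ⟨e, t', rfl⟩ : ∃ e t', t = e :: t' := by
        cases t with
        | nil => simp at hf
        | cons e t' => exact ⟨e, t', rfl⟩
      have hef := hf
      rw [List.map_cons] at hef
      injection hef with he hf'
      by_cases hx : x = i
      · simp only [projSeq, if_pos hx] at hS'
        cases ht with
        | cons_cons _ h' =>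
            simpa using drop_sublist_projSeq rest α β S' t' hS' h' hf'
        | cons _ h' =>
            -- e :: t' <+ rest
            have hsub : ((i :: α) ++ β).Sublist (rest.map Prod.fst) := by
              have := (h' : (e :: t').Sublist rest).map Prod.fst
              exact hf ▸ this
            have hsub' : (i :: α).Sublist (rest.map Prod.fst) :=
              (List.sublist_append_left _ _).trans hsub
            obtain ⟨T, hT⟩ := Option.isSome_iff_exists.1
              (projSeq_isSome_of_sublist rest (i :: α) hsub')
            have h1 := drop_sublist_projSeq rest (i :: α) β T (e :: t') hT h' hf
            exact h1.trans (projSeq_cons_suffix rest i α T S' hT hS').sublist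
      · simp only [projSeq, if_neg hx] at hS'
        cases ht with
        | cons_cons _ h' => exact absurd (he ▸ rfl) hx
        | cons _ h' => exact drop_sublist_projSeq rest (i :: α) β S' (e :: t') hS' h' hf

theorem le_maxPrS [DecidableEq I] {o S : USeq I} {γ : List I}
    (hs : o.Sublist S) (hm : o.map Prod.fst = γ) :
    (o.map Prod.snd).prod ≤ maxPrS γ S := by
  unfold maxPrS
  have hmem : (o.map Prod.snd).prod ∈
      ((S.sublists.filter fun o => decide (o.map Prod.fst = γ)).map
        fun o => (o.map Prod.snd).prod) :=
    List.mem_map_of_mem (List.mem_filter.2 ⟨List.mem_sublists.2 hs, by simp [hm]⟩)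
  have hle := List.le_maximum_of_mem' hmem
  cases hmax : List.maximum ((S.sublists.filter fun o => decide (o.map Prod.fst = γ)).map
      fun o => (o.map Prod.snd).prod) with
  | bot => rw [hmax] at hle; simp at hle
  | coe m => rw [hmax] at hle; simpa using hle

theorem maxPrS_nonneg [DecidableEq I] {S : USeq I} (hp : ∀ e ∈ S, 0 ≤ e.2) (γ : List I) :
    0 ≤ maxPrS γ S := by
  unfold maxPrS
  cases hmax : List.maximum ((S.sublists.filter fun o => decide (o.map Prod.fst = γ)).map
      fun o => (o.map Prod.snd).prod) with
  | bot => simp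
  | coe m =>
    have hm := List.maximum_mem hmax
    simp only [List.mem_map, List.mem_filter, List.mem_sublists, decide_eq_true_eq] at hm
    obtain ⟨o, ⟨ho, _⟩, rfl⟩ := hm
    simp only [WithBot.unbotD_coe]
    refine List.prod_nonneg fun x hx => ?_
    obtain ⟨e, he, rfl⟩ := List.mem_map.1 hx
    exact hp e (ho.subset he)

theorem maxPrS_le [DecidableEq I] {S : USeq I} {γ : List I} {c : ℝ} (hc : 0 ≤ c)
    (h : ∀ o : USeq I, o.Sublist S → o.map Prod.fst = γ → (o.map Prod.snd).prod ≤ c) :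
    maxPrS γ S ≤ c := by
  unfold maxPrS
  cases hmax : List.maximum ((S.sublists.filter fun o => decide (o.map Prod.fst = γ)).map
      fun o => (o.map Prod.snd).prod) with
  | bot => simpa using hc
  | coe m =>
    have hm := List.maximum_mem hmax
    simp only [List.mem_map, List.mem_filter, List.mem_sublists, decide_eq_true_eq] at hm
    obtain ⟨o, ⟨ho, hof⟩, rfl⟩ := hm
    simpa using h o ho hof

/-- If all probabilities of `S` are nonnegative and `α` occurs in `S`, then for every
pattern `β`, `maxPr_S(α ++ β) ≤ maxPr_S(α) * maxPr_{S|α}(β)`. -/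
theorem maxPrS_append_le_mul [DecidableEq I]
    (S : USeq I) (hp : ∀ e ∈ S, 0 ≤ e.2)
    (α : List I) (hα : Occurs α S)
    (S' : USeq I) (hS' : projSeq α S = some S') (β : List I) :
    maxPrS (α ++ β) S ≤ maxPrS α S * maxPrS β S' := by
  have hpS' : ∀ e ∈ S', 0 ≤ e.2 := fun e he =>
    hp e ((projSeq_suffix S α S' hS').sublist.subset he)
  have hA0 : 0 ≤ maxPrS α S := maxPrS_nonneg hp α
  have hB0 : 0 ≤ maxPrS β S' := maxPrS_nonneg hpS' β
  refine maxPrS_le (mul_nonneg hA0 hB0) fun o ho hof => ?_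
  have h1 : (o.take α.length).map Prod.fst = α := by
    rw [List.map_take, hof]
    exact List.take_left' rfl
  have h2 : (o.drop α.length).map Prod.fst = β := by
    rw [List.map_drop, hof]
    exact List.drop_left' rfl
  have ht : (o.take α.length).Sublist S := (List.take_sublist _ _).trans ho
  have hd : (o.drop α.length).Sublist S' := drop_sublist_projSeq S α β S' o hS' ho hof
  have e1 := le_maxPrS ht h1
  have e2 := le_maxPrS hd h2
  have hdn : 0 ≤ ((o.drop α.length).map Prod.snd).prod := by
    refine List.prod_nonneg fun x hx => ?_
    obtain ⟨e, he, rfl⟩ := List.mem_map.1 hx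
    exact hp e (ho.subset ((List.drop_sublist _ _).subset he))
  calc (o.map Prod.snd).prod
      = ((o.take α.length).map Prod.snd).prod * ((o.drop α.length).map Prod.snd).prod := by
        rw [← List.prod_append, ← List.map_append, List.take_append_drop]
    _ ≤ maxPrS α S * maxPrS β S' := mul_le_mul e1 e2 hdn hA0
end

section
/- (Correctness of the SupCalc dynamic program.) Let S = [(x₁,p₁), …, (x_n,p_n)] be an uncertain sequence with p_j ≥ 0 for all j, and let α = [i₁, …, i_m] be a nonempty pattern. Define A : {0,…,m} × {0,…,n} → ℝ by: A(0,j) = 1 for all 0 ≤ j ≤ n; A(k,0) = 0 for all 1 ≤ k ≤ m; and for 1 ≤ k ≤ m and 1 ≤ j ≤ n, A(k,j) = p_j · max_{0 ≤ j' < j} A(k−1, j') if x_j = i_k, and A(k,j) = 0 otherwise. Then max_{0 ≤ j ≤ n} A(m,j) = maxPr_S(α). -/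
variable {I : Type*}

namespace SupCalcAux

def m0 (l : List ℝ) : ℝ := l.foldr max 0

lemma m0_nonneg (l : List ℝ) : 0 ≤ m0 l := by
  induction l with
  | nil => simp [m0]
  | cons a l ih => simp only [m0, List.foldr_cons] at *; exact le_max_of_le_right ih

lemma m0_cons (a : ℝ) (l : List ℝ) : m0 (a :: l) = max a (m0 l) := rfl

lemma m0_append (l1 l2 : List ℝ) : m0 (l1 ++ l2) = max (m0 l1) (m0 l2) := by
  induction l1 with
  | nil => rw [List.nil_append]; exact (max_eq_right (m0_nonneg l2)).symm ▸ (by simp [m0, max_eq_right (m0_nonneg l2)])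
  | cons a l ih => simp [m0_cons, List.cons_append, ih, max_assoc]

lemma m0_map_mul (c : ℝ) (hc : 0 ≤ c) (l : List ℝ) :
    m0 (l.map fun x => c * x) = c * m0 l := by
  induction l with
  | nil => simp [m0]
  | cons a l ih => simp [m0_cons, ih, mul_max_of_nonneg _ _ hc]

lemma m0_ones (l : List ℝ) (h1 : ∀ x ∈ l, x = 1) (hne : l ≠ []) : m0 l = 1 := by
  induction l with
  | nil => simp at hne
  | cons a l ih =>
    rcases eq_or_ne l [] with rfl | hl
    · simp [m0, h1 a (by simp)]
    · rw [m0_cons, h1 a (by simp), ih (fun x hx => h1 x (by simp [hx])) hl]; simp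

lemma maximum_unbot'_eq_m0 (l : List ℝ) (h : ∀ x ∈ l, 0 ≤ x) :
    WithBot.unbotD 0 (l.maximum) = m0 l := by
  induction l with
  | nil => simp [m0]
  | cons a l ih =>
    rw [List.maximum_cons, m0_cons, ← ih (fun x hx => h x (by simp [hx]))]
    cases hb : l.maximum with
    | bot => simp [max_eq_left (h a (by simp))]
    | coe b => rw [← WithBot.coe_max, WithBot.unbotD_coe, WithBot.unbotD_coe]

end SupCalcAux

namespace SupCalcAux

variable {I : Type*} [DecidableEq I]

def occs (α : List I) (S : List (I × ℝ)) : List ℝ :=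
  (S.sublists.filter fun o => decide (o.map Prod.fst = α)).map
    fun o => (o.map Prod.snd).prod

lemma occs_nonneg {α : List I} {S : List (I × ℝ)} (hp : ∀ e ∈ S, 0 ≤ e.2) :
    ∀ x ∈ occs α S, 0 ≤ x := by
  intro x hx
  simp only [occs, List.mem_map, List.mem_filter, List.mem_sublists] at hx
  obtain ⟨o, ⟨ho, -⟩, rfl⟩ := hx
  refine List.prod_nonneg ?_
  intro a ha
  simp only [List.mem_map] at ha
  obtain ⟨e, he, rfl⟩ := ha
  exact hp e (ho.subset he)

lemma m0_occs_nil (S : List (I × ℝ)) : m0 (occs [] S) = 1 := by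
  refine m0_ones _ ?_ ?_
  · intro x hx
    simp only [occs, List.mem_map, List.mem_filter] at hx
    obtain ⟨o, ⟨-, ho⟩, rfl⟩ := hx
    simp only [decide_eq_true_eq, List.map_eq_nil_iff] at ho
    simp [ho]
  · have : (1:ℝ) ∈ occs ([] : List I) S := by
      simp only [occs, List.mem_map]
      exact ⟨[], by simp, by simp⟩
    exact fun h => by simp [h] at this

lemma occs_nil_seq {α : List I} (hα : α ≠ []) : occs α ([] : List (I × ℝ)) = [] := by
  simp [occs, List.sublists_nil, List.filter, hα.symm]

lemma occs_concat {α : List I} (hα : α ≠ []) (T : List (I × ℝ)) (e : I × ℝ) :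
    occs α (T ++ [e]) =
      occs α T ++
        (if e.1 = α.getLast hα then (occs α.dropLast T).map (fun x => e.2 * x) else []) := by
  have hsplit : α.dropLast ++ [α.getLast hα] = α := List.dropLast_append_getLast hα
  unfold occs
  rw [List.sublists_concat, List.filter_append, List.filter_map, List.map_append]
  congr 1
  have key : ∀ o : List (I × ℝ),
      ((fun o => decide (List.map Prod.fst o = α)) ∘ fun x => x ++ [e]) o =
        decide (e.1 = α.getLast hα ∧ List.map Prod.fst o = α.dropLast) := by
    intro o
    simp only [Function.comp_apply, List.map_append, List.map_cons, List.map_nil,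
      decide_eq_decide]
    constructor
    · intro h
      rw [← hsplit] at h
      have := List.concat_inj.mp (by simpa [List.concat_eq_append] using h)
      exact ⟨this.2.symm ▸ rfl, this.1⟩
    · rintro ⟨h1, h2⟩
      rw [h2, h1, hsplit]
  by_cases hc : e.1 = α.getLast hα
  · rw [if_pos hc]
    have : (List.filter ((fun o => decide (List.map Prod.fst o = α)) ∘ fun x => x ++ [e])
        T.sublists) = T.sublists.filter fun o => decide (List.map Prod.fst o = α.dropLast) := by
      apply List.filter_congr
      intro o _
      rw [key o]
      simp [hc]
    rw [this, List.map_map, List.map_map]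
    apply List.map_congr_left
    intro o _
    simp [mul_comm]
  · rw [if_neg hc]
    have : (List.filter ((fun o => decide (List.map Prod.fst o = α)) ∘ fun x => x ++ [e])
        T.sublists) = [] := by
      rw [List.filter_eq_nil_iff]
      intro o _
      rw [key o]
      simp [hc]
    rw [this]
    simp

lemma m0_occs_concat {α : List I} (hα : α ≠ []) (T : List (I × ℝ)) (e : I × ℝ)
    (he : 0 ≤ e.2) (i : I) (hi : α.getLast hα = i) :
    m0 (occs α (T ++ [e])) =
      max (m0 (occs α T)) (if e.1 = i then e.2 * m0 (occs α.dropLast T) else 0) := by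
  rw [occs_concat hα T e, m0_append, hi]
  by_cases hc : e.1 = i
  · rw [if_pos hc, if_pos hc, m0_map_mul _ he]
  · rw [if_neg hc, if_neg hc]
    simp [m0, max_eq_left (m0_nonneg _)]

end SupCalcAux

/-- Correctness of the SupCalc dynamic program.  Let `S = [(x₁,p₁), …, (xₙ,pₙ)]` with all
`pⱼ ≥ 0` and let `α = [i₁, …, iₘ]` be nonempty.  Suppose `A` satisfies: `A 0 j = 1` for
`0 ≤ j ≤ n`; `A k 0 = 0` for `1 ≤ k ≤ m`; and for `1 ≤ k ≤ m`, `1 ≤ j ≤ n`,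
`A k j = pⱼ * max_{0 ≤ j' < j} A (k-1) j'` if `xⱼ = iₖ` and `A k j = 0` otherwise
(indices of `S` and `α` being 1-based).  Then `max_{0 ≤ j ≤ n} A m j = maxPr_S(α)`. -/
theorem supCalc_dp_correct [DecidableEq I]
    (S : USeq I) (hp : ∀ e ∈ S, 0 ≤ e.2)
    (α : List I) (hα : α ≠ [])
    (A : ℕ → ℕ → ℝ)
    (h0 : ∀ j : ℕ, j ≤ S.length → A 0 j = 1)
    (hbase : ∀ k : ℕ, 1 ≤ k → k ≤ α.length → A k 0 = 0)
    (hrec : ∀ (k j : ℕ) (hk1 : 1 ≤ k) (hk2 : k ≤ α.length)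
        (hj1 : 1 ≤ j) (hj2 : j ≤ S.length),
        A k j =
          if (S.get ⟨j - 1, by omega⟩).1 = α.get ⟨k - 1, by omega⟩ then
            (S.get ⟨j - 1, by omega⟩).2 *
              WithBot.unbotD 0 (((List.range j).map (A (k - 1))).maximum)
          else 0) :
    WithBot.unbotD 0 (((List.range (S.length + 1)).map (A α.length)).maximum) = maxPrS α S := by
  classical
  have hPr : maxPrS α S = SupCalcAux.m0 (SupCalcAux.occs α S) :=
    SupCalcAux.maximum_unbot'_eq_m0 _ (SupCalcAux.occs_nonneg hp)
  -- nonnegativity of the DP table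
  have nonnegA : ∀ k, k ≤ α.length → ∀ j, j ≤ S.length → 0 ≤ A k j := by
    intro k
    induction k with
    | zero => intro _ j hj; rw [h0 j hj]; norm_num
    | succ k ih =>
      intro hk j hj
      cases j with
      | zero => rw [hbase (k+1) (by omega) hk]
      | succ j =>
        rw [hrec (k+1) (j+1) (by omega) hk (by omega) hj]
        split
        · refine mul_nonneg (hp _ (S.get_mem _)) ?_
          rw [SupCalcAux.maximum_unbot'_eq_m0]
          · exact SupCalcAux.m0_nonneg _
          · intro x hx
            simp only [List.mem_map, List.mem_range] at hx
            obtain ⟨j', hj', rfl⟩ := hx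
            exact ih (by omega) j' (by omega)
        · exact le_rfl
  -- conversion of DP maxima to foldr-max form
  have conv : ∀ k, k ≤ α.length → ∀ j, j ≤ S.length + 1 →
      WithBot.unbotD 0 (((List.range j).map (A k)).maximum) =
        SupCalcAux.m0 ((List.range j).map (A k)) := by
    intro k hk j hj
    apply SupCalcAux.maximum_unbot'_eq_m0
    intro x hx
    simp only [List.mem_map, List.mem_range] at hx
    obtain ⟨j', hj', rfl⟩ := hx
    exact nonnegA k hk j' (by omega)
  -- the main invariant
  have main : ∀ k, k ≤ α.length → ∀ j, j ≤ S.length →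
      SupCalcAux.m0 ((List.range (j+1)).map (A k)) =
        SupCalcAux.m0 (SupCalcAux.occs (α.take k) (S.take j)) := by
    intro k
    induction k with
    | zero =>
      intro _ j hj
      rw [List.take_zero, SupCalcAux.m0_occs_nil]
      apply SupCalcAux.m0_ones
      · intro x hx
        simp only [List.mem_map, List.mem_range] at hx
        obtain ⟨j', hj', rfl⟩ := hx
        exact h0 j' (by omega)
      · simp
    | succ k ih =>
      intro hk j
      induction j with
      | zero =>
        intro _
        have hne : α.take (k+1) ≠ [] := by
          rw [Ne, List.take_eq_nil_iff]
          push_neg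
          exact ⟨by omega, hα⟩
        rw [List.take_zero, SupCalcAux.occs_nil_seq hne,
          show List.range 1 = [0] from rfl]
        simp only [List.map_cons, List.map_nil]
        rw [hbase (k+1) (by omega) hk]
        simp [SupCalcAux.m0]
      | succ j ihj =>
        intro hj
        have hjn : j < S.length := by omega
        have hkm : k < α.length := by omega
        set e := S.get ⟨j, hjn⟩ with he_def
        have he : 0 ≤ e.2 := hp _ (S.get_mem _)
        have hTe : S.take (j+1) = S.take j ++ [e] := by
          rw [← List.take_concat_get hjn, List.concat_eq_append]
          simp [he_def]
        have hne : α.take (k+1) ≠ [] := by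
          rw [Ne, List.take_eq_nil_iff]
          push_neg
          exact ⟨by omega, hα⟩
        have hlen : (α.take (k+1)).length = k + 1 := by
          rw [List.length_take]; omega
        have hlast : (α.take (k+1)).getLast hne = α.get ⟨k, hkm⟩ := by
          rw [List.getLast_eq_getElem]
          simp [List.get_eq_getElem, List.getElem_take, hlen]
        have hdrop : (α.take (k+1)).dropLast = α.take k := by
          rcases lt_or_eq_of_le hk with h | h
          · rw [List.dropLast_take h]
            simp
          · rw [h, List.take_length, List.dropLast_eq_take]
            congr 1
            omega
        -- left side
        rw [List.range_succ, List.map_append, SupCalcAux.m0_append]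
        have hsingle : SupCalcAux.m0 (List.map (A (k+1)) [j+1]) = A (k+1) (j+1) := by
          have h1 : SupCalcAux.m0 (List.map (A (k+1)) [j+1]) = max (A (k+1) (j+1)) 0 := rfl
          rw [h1, max_eq_left (nonnegA (k+1) hk (j+1) hj)]
        rw [hsingle, hrec (k+1) (j+1) (by omega) hk (by omega) hj]
        simp only [Nat.add_sub_cancel]
        -- right side
        rw [hTe, SupCalcAux.m0_occs_concat hne (S.take j) e he (α.get ⟨k, hkm⟩) hlast,
          hdrop, ← ih (by omega) j (by omega), ← ihj (by omega)]
        congr 1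
        rw [conv k (by omega) (j+1) (by omega)]
  have := main α.length le_rfl S.length le_rfl
  rw [List.take_length, List.take_length] at this
  rw [conv α.length le_rfl (S.length + 1) le_rfl, this, hPr]
end

section
/- Let DB be an uncertain database all of whose existential probabilities lie in [0,1]. Then for all patterns α and β, maxPr(α ++ β) ≤ maxPr(α); that is, the measure maxPr is anti-monotone along prefix extensions of patterns. -/
variable {I : Type*}

lemma projSeq_sublist [DecidableEq I] :
    ∀ (α : List I) (S S' : USeq I), projSeq α S = some S' → S'.Sublist S := by
  intro α
  induction α with
  | nil => intro S S' h; simp [projSeq] at h; simp [h]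
  | cons i α ih =>
      intro S
      induction S with
      | nil => intro S' h; simp [projSeq] at h
      | cons e rest ihS =>
          intro S' h
          obtain ⟨x, p⟩ := e
          by_cases hx : x = i
          · simp [projSeq, hx] at h
            exact (ih rest S' h).cons _
          · simp [projSeq, hx] at h
            exact (ihS S' h).cons _

lemma hp_projDB [DecidableEq I] (DB : UDB I)
    (hp : ∀ S ∈ DB, ∀ e ∈ S, e.2 ∈ Set.Icc (0 : ℝ) 1) (α : List I) :
    ∀ S ∈ projDB α DB, ∀ e ∈ S, e.2 ∈ Set.Icc (0 : ℝ) 1 := by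
  intro S' hS' e he
  rw [projDB, List.mem_filterMap] at hS'
  obtain ⟨S, hS, hproj⟩ := hS'
  exact hp S hS e ((projSeq_sublist α S S' hproj).subset he)

lemma Phat_mem_Icc [DecidableEq I] (D : UDB I)
    (hp : ∀ S ∈ D, ∀ e ∈ S, e.2 ∈ Set.Icc (0 : ℝ) 1) (i : I) :
    Phat D i ∈ Set.Icc (0 : ℝ) 1 := by
  rw [Phat]
  rcases h : ((D.flatten.filter fun e => decide (e.1 = i)).map Prod.snd).maximum with _ | a
  · rw [h]
    show WithBot.unbotD (0 : ℝ) ⊥ ∈ Set.Icc (0 : ℝ) 1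
    rw [WithBot.unbotD_bot]
    norm_num
  · have ha := List.maximum_mem h
    rw [List.mem_map] at ha
    obtain ⟨e, he, hea⟩ := ha
    rw [List.mem_filter] at he
    have := he.1
    rw [List.mem_flatten] at this
    obtain ⟨S, hS, heS⟩ := this
    have := hp S hS e heS
    rw [hea] at this
    rw [h]
    show WithBot.unbotD (0 : ℝ) (a : WithBot ℝ) ∈ Set.Icc (0 : ℝ) 1
    rw [WithBot.unbotD_coe]
    simpa using this

lemma maxPrDB_nonneg [DecidableEq I] (DB : UDB I)
    (hp : ∀ S ∈ DB, ∀ e ∈ S, e.2 ∈ Set.Icc (0 : ℝ) 1) (α : List I) :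
    0 ≤ maxPrDB DB α := by
  rw [maxPrDB]
  apply Finset.prod_nonneg
  intro k _
  exact (Phat_mem_Icc _ (hp_projDB DB hp _) _).1

lemma projSeq_append [DecidableEq I] :
    ∀ (α β : List I) (S : USeq I),
      projSeq (α ++ β) S = (projSeq α S).bind (projSeq β) := by
  intro α
  induction α with
  | nil => intro β S; simp [projSeq]
  | cons i α ih =>
      intro β S
      induction S with
      | nil => simp [projSeq]
      | cons e rest ihS =>
          obtain ⟨x, p⟩ := e
          by_cases hx : x = i
          · simp [projSeq, hx, ih]
          · simp only [projSeq, hx, if_false, List.cons_append] at ihS ⊢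
            simpa using ihS

lemma projDB_nil [DecidableEq I] (DB : UDB I) : projDB ([] : List I) DB = DB := by
  have h : (projSeq ([] : List I) : USeq I → Option (USeq I)) = some := by
    funext S; simp [projSeq]
  rw [projDB, h, List.filterMap_some]

lemma projDB_cons [DecidableEq I] (i : I) (τ : List I) (DB : UDB I) :
    projDB (i :: τ) DB = projDB τ (projDB [i] DB) := by
  rw [projDB, projDB, projDB, List.filterMap_filterMap]
  have : (i :: τ) = [i] ++ τ := rfl
  rw [this]
  congr 1
  funext S
  rw [projSeq_append]

lemma maxPrDB_cons [DecidableEq I] (DB : UDB I) (i : I) (α : List I) :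
    maxPrDB DB (i :: α) = Phat DB i * maxPrDB (projDB [i] DB) α := by
  rw [maxPrDB, maxPrDB]
  show (∏ k : Fin (α.length + 1), Phat (projDB ((i :: α).take k.val) DB)
      ((i :: α).get k)) = _
  rw [Fin.prod_univ_succ]
  congr 1
  · show Phat (projDB [] DB) i = Phat DB i
    rw [projDB_nil]
  · apply Finset.prod_congr rfl
    intro k _
    show Phat (projDB (i :: α.take k.val) DB) (α.get k) = _
    rw [projDB_cons]

/-- If every factor lies in `[0,1]`, the product is at most `1`. -/
lemma maxPrDB_le_one [DecidableEq I] (DB : UDB I)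
    (hp : ∀ S ∈ DB, ∀ e ∈ S, e.2 ∈ Set.Icc (0 : ℝ) 1) (α : List I) :
    maxPrDB DB α ≤ 1 := by
  rw [maxPrDB]
  apply Finset.prod_le_one
  · intro k _
    exact (Phat_mem_Icc _ (hp_projDB DB hp _) _).1
  · intro k _
    exact (Phat_mem_Icc _ (hp_projDB DB hp _) _).2

/-- If all probabilities of `DB` lie in `[0,1]`, then for all patterns `α` and `β`,
`maxPr(α ++ β) ≤ maxPr(α)`: `maxPr` is anti-monotone along prefix extensions. -/
theorem maxPrDB_append_le [DecidableEq I]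
    (DB : UDB I) (hp : ∀ S ∈ DB, ∀ e ∈ S, e.2 ∈ Set.Icc (0 : ℝ) 1)
    (α β : List I) :
    maxPrDB DB (α ++ β) ≤ maxPrDB DB α := by
  induction α generalizing DB with
  | nil =>
      simpa [maxPrDB] using maxPrDB_le_one DB hp β
  | cons a α ih =>
      rw [List.cons_append, maxPrDB_cons, maxPrDB_cons]
      apply mul_le_mul_of_nonneg_left _ (Phat_mem_Icc _ hp a).1
      exact ih (projDB [a] DB) (hp_projDB DB hp _)
end
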